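/- Let c_e, c₁, c₃ be real constants and let B: I → (0,∞) be differentiable on an open interval I ⊆ (0,∞) with c₁ r⁴ B(r)⁴ + c₃ c_e ≠ 0 on I, satisfying the ODE B'(r)/B(r) = c_e / (r·(c₁ r⁴ B(r)⁴ + c₃ c_e)) for all r ∈ I. Then the function r ↦ B(r)^{4c₃}·((c₃+1)·c_e·r⁻⁴ + c₁·B(r)⁴) is constant on I. -/

import Mathlib

open Real Filter Topology Set

/-- If `B : (a,b) → (0,∞)` (with `(a,b) ⊆ (0,∞)`) is differentiable with
`c₁ r⁴B⁴ + c₃c_e ≠ 0` and satisfies the ODE `B'/B = c_e/(r(c₁r⁴B⁴ + c₃c_e))`, then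
`r ↦ B^{4c₃}·((c₃+1)c_e r⁻⁴ + c₁B⁴)` is constant on `(a,b)`. -/
theorem B_algebraic_first_integral
    (a b c_e c₁ c₃ : ℝ) (ha : 0 ≤ a)
    (B : ℝ → ℝ)
    (hBpos : ∀ r ∈ Ioo a b, 0 < B r)
    (hBdiff : ∀ r ∈ Ioo a b, DifferentiableAt ℝ B r)
    (hden : ∀ r ∈ Ioo a b, c₁ * r ^ 4 * B r ^ 4 + c₃ * c_e ≠ 0)
    (hode : ∀ r ∈ Ioo a b,
      deriv B r / B r = c_e / (r * (c₁ * r ^ 4 * B r ^ 4 + c₃ * c_e))) :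
    ∃ c : ℝ, ∀ r ∈ Ioo a b,
      B r ^ (4 * c₃) * ((c₃ + 1) * c_e * (r ^ 4)⁻¹ + c₁ * B r ^ 4) = c := by
  rcases eq_empty_or_nonempty (Ioo a b) with h | ⟨r₀, hr₀⟩
  · exact ⟨0, fun r hr => absurd hr (h ▸ notMem_empty r)⟩
  set F : ℝ → ℝ := fun r => B r ^ (4 * c₃) * ((c₃ + 1) * c_e * (r ^ 4)⁻¹ + c₁ * B r ^ 4)
    with hF
  have key : ∀ r ∈ Ioo a b, HasDerivAt F 0 r := by
    intro r hr
    have hrpos : 0 < r := lt_of_le_of_lt ha hr.1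
    have hB := hBpos r hr
    have hD := hden r hr
    have hrD : r * (c₁ * r ^ 4 * B r ^ 4 + c₃ * c_e) ≠ 0 :=
      mul_ne_zero hrpos.ne' hD
    have hB' : deriv B r = B r * (c_e / (r * (c₁ * r ^ 4 * B r ^ 4 + c₃ * c_e))) := by
      have := hode r hr
      field_simp at this ⊢
      linarith [this]
    have hBd : HasDerivAt B (deriv B r) r := (hBdiff r hr).hasDerivAt
    have h1 : HasDerivAt (fun r => B r ^ (4 * c₃))
        (deriv B r * (4 * c₃) * B r ^ (4 * c₃ - 1)) r :=
      hBd.rpow_const (Or.inl hB.ne')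
    have h2 : HasDerivAt (fun r : ℝ => (r ^ 4)⁻¹)
        (-(↑4 * r ^ 3) / (r ^ 4) ^ 2) r :=
      (hasDerivAt_pow 4 r).inv (pow_ne_zero 4 hrpos.ne')
    have h3 : HasDerivAt (fun r => B r ^ 4) (↑4 * B r ^ 3 * deriv B r) r := hBd.pow 4
    have h4 : HasDerivAt (fun r => (c₃ + 1) * c_e * (r ^ 4)⁻¹ + c₁ * B r ^ 4)
        ((c₃ + 1) * c_e * (-(↑4 * r ^ 3) / (r ^ 4) ^ 2) + c₁ * (↑4 * B r ^ 3 * deriv B r)) r :=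
      ((h2.const_mul ((c₃ + 1) * c_e)).add (h3.const_mul c₁))
    have h5 := h1.mul h4
    have heq : deriv B r * (4 * c₃) * B r ^ (4 * c₃ - 1) *
          ((c₃ + 1) * c_e * (r ^ 4)⁻¹ + c₁ * B r ^ 4) +
        B r ^ (4 * c₃) *
          ((c₃ + 1) * c_e * (-(↑4 * r ^ 3) / (r ^ 4) ^ 2) +
            c₁ * (↑4 * B r ^ 3 * deriv B r)) = 0 := by
      rw [hB', Real.rpow_sub_one hB.ne']
      have hD' : c_e * c₃ + B r ^ 4 * r ^ 4 * c₁ ≠ 0 := by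
        intro h0; exact hD (by linarith)
      have hX : (c_e * c₃ + B r ^ 4 * r ^ 4 * c₁) * (c_e * c₃ + B r ^ 4 * r ^ 4 * c₁)⁻¹ = 1 :=
        mul_inv_cancel₀ hD'
      field_simp
      linear_combination (4 * c_e * B r ^ (c₃ * 4) * (c₃ + 1)) * hX
    rw [heq] at h5
    exact h5
  refine ⟨F r₀, fun r hr => ?_⟩
  have hdiff : DifferentiableOn ℝ F (Ioo a b) :=
    fun x hx => ((key x hx).differentiableAt).differentiableWithinAt
  have hfd : ∀ x ∈ Ioo a b, fderivWithin ℝ F (Ioo a b) x = 0 := by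
    intro x hx
    rw [fderivWithin_of_isOpen isOpen_Ioo hx, (key x hx).hasFDerivAt.fderiv]
    ext
    simp
  exact (convex_Ioo a b).is_const_of_fderivWithin_eq_zero hdiff hfd hr hr₀
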